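/- Let U and U' be subspaces of ℂⁿ = E₁ ⊕ E₂ with dim U = dim U' = k. Then there exist linear automorphisms g of E₁ and h of E₂ with (g ⊕ h)(U) = U' if and only if dim(U ∩ E₁) = dim(U' ∩ E₁) and dim(U ∩ E₂) = dim(U' ∩ E₂). (This classifies the GL(p)×GL(q)-orbits Q(s,t) on the Grassmannian Gr(k,n).) -/

import Mathlib

open Module Submodule

open Module Submodule

theorem glue2 {V : Type*} [AddCommGroup V] [Module ℂ V] [FiniteDimensional ℂ V]
    (X Y X' Y' : Submodule ℂ V) (hd : Disjoint X Y) (hd' : Disjoint X' Y')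
    (e : X ≃ₗ[ℂ] X') (f : Y ≃ₗ[ℂ] Y') :
    ∃ F : V ≃ₗ[ℂ] V, (∀ x : X, F ↑x = ↑(e x)) ∧ (∀ y : Y, F ↑y = ↑(f y)) := by
  obtain ⟨C, hC⟩ := Submodule.exists_isCompl (X ⊔ Y)
  obtain ⟨C', hC'⟩ := Submodule.exists_isCompl (X' ⊔ Y')
  have hXc : IsCompl X (Y ⊔ C) := hd.isCompl_sup_right_of_isCompl_sup_left hC
  have hYc : IsCompl Y (X ⊔ C) := by
    have := hd.symm.isCompl_sup_right_of_isCompl_sup_left (by rwa [sup_comm] at hC)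
    exact this
  have hcrk : finrank ℂ C = finrank ℂ C' := by
    have h1 := Submodule.finrank_add_eq_of_isCompl hC
    have h2 := Submodule.finrank_add_eq_of_isCompl hC'
    have hXY : finrank ℂ ↥(X ⊔ Y) = finrank ℂ ↥(X' ⊔ Y') := by
      have a1 := Submodule.finrank_sup_add_finrank_inf_eq X Y
      have a2 := Submodule.finrank_sup_add_finrank_inf_eq X' Y'
      rw [hd.eq_bot] at a1
      rw [hd'.eq_bot] at a2
      simp only [finrank_bot, add_zero] at a1 a2
      rw [a1, a2, e.finrank_eq, f.finrank_eq]
    omega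
  let c : C ≃ₗ[ℂ] C' := LinearEquiv.ofFinrankEq _ _ hcrk
  set PX := X.projectionOnto (Y ⊔ C) hXc with hPX
  set PY := Y.projectionOnto (X ⊔ C) hYc with hPY
  set PC := C.projectionOnto (X ⊔ Y) hC.symm with hPC
  set F : V →ₗ[ℂ] V :=
    X'.subtype ∘ₗ (e : X →ₗ[ℂ] X') ∘ₗ PX + Y'.subtype ∘ₗ (f : Y →ₗ[ℂ] Y') ∘ₗ PY +
      C'.subtype ∘ₗ (c : C →ₗ[ℂ] C') ∘ₗ PC with hF
  have hFapp : ∀ v, F v = ↑(e (PX v)) + ↑(f (PY v)) + ↑(c (PC v)) := fun v => rfl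
  have hFx : ∀ x : X, F ↑x = ↑(e x) := by
    intro x
    rw [hFapp]
    rw [Submodule.linearProjOfIsCompl_apply_left hXc x,
      Submodule.projectionOnto_apply_of_mem_right hYc ((le_sup_left : X ≤ X ⊔ C) x.2),
      Submodule.projectionOnto_apply_of_mem_right hC.symm ((le_sup_left : X ≤ X ⊔ Y) x.2)]
    simp
  have hFy : ∀ y : Y, F ↑y = ↑(f y) := by
    intro y
    rw [hFapp]
    rw [Submodule.linearProjOfIsCompl_apply_left hYc y,
      Submodule.projectionOnto_apply_of_mem_right hXc ((le_sup_left : Y ≤ Y ⊔ C) y.2),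
      Submodule.projectionOnto_apply_of_mem_right hC.symm ((le_sup_right : Y ≤ X ⊔ Y) y.2)]
    simp
  have hinj : Function.Injective F := by
    rw [← LinearMap.ker_eq_bot, eq_bot_iff]
    intro v hv
    simp only [LinearMap.mem_ker] at hv
    rw [hFapp] at hv
    -- the three summands lie in X', Y', C'
    have hdX' : Disjoint X' (Y' ⊔ C') := hd'.disjoint_sup_right_of_disjoint_sup_left hC'.disjoint
    have hxz : (↑(e (PX v)) : V) = 0 := by
      have hmem : (↑(e (PX v)) : V) ∈ X' ⊓ (Y' ⊔ C') := by
        constructor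
        · exact (e (PX v)).2
        · have : (↑(e (PX v)) : V) = -(↑(f (PY v)) + ↑(c (PC v))) := by
            rw [eq_neg_iff_add_eq_zero, ← add_assoc]; exact hv
          rw [this]
          exact neg_mem (add_mem ((le_sup_left : Y' ≤ Y' ⊔ C') (f (PY v)).2) ((le_sup_right : C' ≤ Y' ⊔ C') (c (PC v)).2))
      rw [hdX'.eq_bot] at hmem
      exact hmem
    have hdYC : Disjoint Y' C' := hC'.disjoint.mono_left le_sup_right
    have hyz : (↑(f (PY v)) : V) = 0 := by
      have hmem : (↑(f (PY v)) : V) ∈ Y' ⊓ C' := by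
        constructor
        · exact (f (PY v)).2
        · have : (↑(f (PY v)) : V) = -(↑(c (PC v))) := by
            rw [hxz, zero_add] at hv; exact eq_neg_of_add_eq_zero_left hv
          rw [this]; exact neg_mem (c (PC v)).2
      rw [hdYC.eq_bot] at hmem
      exact hmem
    have hcz : (↑(c (PC v)) : V) = 0 := by
      rw [hxz, hyz] at hv; simpa using hv
    have hPXv : PX v = 0 := by
      have := e.injective (a₁ := PX v) (a₂ := 0) ?_
      · exact this
      · rw [map_zero]; exact Subtype.ext hxz
    have hPYv : PY v = 0 := by
      have := f.injective (a₁ := PY v) (a₂ := 0) ?_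
      · exact this
      · rw [map_zero]; exact Subtype.ext hyz
    have hPCv : PC v = 0 := by
      have := c.injective (a₁ := PC v) (a₂ := 0) ?_
      · exact this
      · rw [map_zero]; exact Subtype.ext hcz
    -- v ∈ X ⊔ Y from PC v = 0, then components vanish
    have hvXY : v ∈ X ⊔ Y := by
      have := (Submodule.linearProjOfIsCompl_apply_eq_zero_iff hC.symm (x := v)).mp hPCv
      exact this
    obtain ⟨x, hx, y, hy, rfl⟩ := Submodule.mem_sup.mp hvXY
    have h1 : PX (x + y) = ⟨x, hx⟩ := by
      rw [map_add, Submodule.linearProjOfIsCompl_apply_left hXc ⟨x, hx⟩,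
        Submodule.projectionOnto_apply_of_mem_right hXc ((le_sup_left : Y ≤ Y ⊔ C) hy)]
      simp
    have h2 : PY (x + y) = ⟨y, hy⟩ := by
      rw [map_add, Submodule.linearProjOfIsCompl_apply_left hYc ⟨y, hy⟩,
        Submodule.projectionOnto_apply_of_mem_right hYc ((le_sup_left : X ≤ X ⊔ C) hx)]
      simp
    have hx0 : x = 0 := by
      have := h1 ▸ hPXv
      simpa using congrArg Subtype.val this
    have hy0 : y = 0 := by
      have := h2 ▸ hPYv
      simpa using congrArg Subtype.val this
    simp [hx0, hy0]
  have hbij : Function.Bijective F :=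
    ⟨hinj, (LinearMap.injective_iff_surjective).mp hinj⟩
  exact ⟨LinearEquiv.ofBijective F hbij, hFx, hFy⟩

open Module Submodule

theorem aux_decomp {V : Type*} [AddCommGroup V] [Module ℂ V] [FiniteDimensional ℂ V]
    (U E₁ E₂ : Submodule ℂ V) (hcompl : IsCompl E₁ E₂) :
    ∃ W : Submodule ℂ V, W ≤ U ∧ Disjoint W ((U ⊓ E₁) ⊔ (U ⊓ E₂)) ∧
      ((U ⊓ E₁) ⊔ (U ⊓ E₂)) ⊔ W = U ∧
      finrank ℂ W + finrank ℂ ↥(U ⊓ E₁) + finrank ℂ ↥(U ⊓ E₂) = finrank ℂ U := by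
  set S := (U ⊓ E₁) ⊔ (U ⊓ E₂) with hS
  have hSU : S ≤ U := sup_le inf_le_left inf_le_left
  obtain ⟨Wc, hWc⟩ := Submodule.exists_isCompl (Submodule.comap U.subtype S)
  refine ⟨Submodule.map U.subtype Wc, Submodule.map_subtype_le U Wc, ?_, ?_, ?_⟩
  · rw [Submodule.disjoint_def]
    rintro _ ⟨w, hw, rfl⟩ hxS
    have hmem : w ∈ Submodule.comap U.subtype S := by
      simpa [Submodule.mem_comap] using hxS
    have := hWc.disjoint.le_bot (Submodule.mem_inf.mpr ⟨hmem, hw⟩)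
    simp_all
  · have : Submodule.map U.subtype (Submodule.comap U.subtype S) = S := by
      rw [Submodule.map_comap_subtype]
      exact inf_eq_right.mpr hSU
    rw [← this, ← Submodule.map_sup, hWc.sup_eq_top, Submodule.map_top,
      Submodule.range_subtype]
  · have h1 : finrank ℂ ↥(Submodule.comap U.subtype S) + finrank ℂ Wc = finrank ℂ U :=
      Submodule.finrank_add_eq_of_isCompl hWc
    have h2 : finrank ℂ ↥(Submodule.map U.subtype Wc) = finrank ℂ Wc :=
      ((Submodule.equivMapOfInjective U.subtype (Submodule.injective_subtype U) Wc).symm).finrank_eq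
    have h3 : finrank ℂ ↥(Submodule.comap U.subtype S) = finrank ℂ S :=
      (Submodule.comapSubtypeEquivOfLe hSU).finrank_eq
    have h4 : finrank ℂ ↥S + finrank ℂ ↥((U ⊓ E₁) ⊓ (U ⊓ E₂)) =
        finrank ℂ ↥(U ⊓ E₁) + finrank ℂ ↥(U ⊓ E₂) :=
      Submodule.finrank_sup_add_finrank_inf_eq _ _
    have h5 : (U ⊓ E₁) ⊓ (U ⊓ E₂) = ⊥ := by
      rw [eq_bot_iff]
      refine le_trans (inf_le_inf inf_le_right inf_le_right) ?_
      rw [hcompl.inf_eq_bot]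
    rw [h5, finrank_bot, add_zero] at h4
    omega

theorem aux_alpha {V : Type*} [AddCommGroup V] [Module ℂ V]
    (U W E₁ E₂ : Submodule ℂ V) (hcompl : IsCompl E₁ E₂) (hWU : W ≤ U)
    (hdisj : Disjoint W ((U ⊓ E₁) ⊔ (U ⊓ E₂))) :
    Function.Injective (E₁.linearProjOfIsCompl E₂ hcompl ∘ₗ W.subtype) ∧
      Disjoint (Submodule.comap E₁.subtype (U ⊓ E₁))
        (LinearMap.range (E₁.linearProjOfIsCompl E₂ hcompl ∘ₗ W.subtype)) := by
  set α := E₁.linearProjOfIsCompl E₂ hcompl ∘ₗ W.subtype with hα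
  have hαw : ∀ w : W, α w = E₁.linearProjOfIsCompl E₂ hcompl ↑w := fun w => rfl
  constructor
  · rw [← LinearMap.ker_eq_bot, eq_bot_iff]
    intro w hw
    simp only [LinearMap.mem_ker, hαw] at hw
    have hwE2 : (↑w : V) ∈ E₂ := (Submodule.linearProjOfIsCompl_apply_eq_zero_iff hcompl).mp hw
    have : (↑w : V) ∈ (U ⊓ E₁) ⊔ (U ⊓ E₂) :=
      (le_sup_right : U ⊓ E₂ ≤ _) ⟨hWU w.2, hwE2⟩
    have := hdisj.le_bot ⟨w.2, this⟩
    simpa [Submodule.mem_bot, ← Subtype.ext_iff] using this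
  · rw [Submodule.disjoint_def]
    rintro z hz ⟨w, rfl⟩
    have hzU : (↑(α w) : V) ∈ U ⊓ E₁ := hz
    have hd : (↑w : V) - ↑(α w) ∈ U ⊓ E₂ := by
      refine Submodule.mem_inf.mpr ⟨sub_mem (hWU w.2) hzU.1, ?_⟩
      · rw [← Submodule.linearProjOfIsCompl_apply_eq_zero_iff hcompl (x := (↑w : V) - ↑(α w)),
          map_sub, hαw]
        simp
        exact sub_self _
    have hwsup : (↑w : V) ∈ (U ⊓ E₁) ⊔ (U ⊓ E₂) := by
      have heq : (↑w : V) = ↑(α w) + ((↑w : V) - ↑(α w)) := by abel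
      rw [heq]
      exact Submodule.add_mem_sup hzU hd
    have hw0 := hdisj.le_bot ⟨w.2, hwsup⟩
    have : w = 0 := by simpa [Submodule.mem_bot, ← Subtype.ext_iff] using hw0
    rw [this, map_zero]

open Module Submodule

section Phi

variable {V : Type*} [AddCommGroup V] [Module ℂ V]
  (E₁ E₂ : Submodule ℂ V) (hcompl : IsCompl E₁ E₂)
  (g : E₁ ≃ₗ[ℂ] E₁) (h : E₂ ≃ₗ[ℂ] E₂)

local notation "Φ" =>
  E₁.subtype ∘ₗ (g : E₁ →ₗ[ℂ] E₁) ∘ₗ E₁.linearProjOfIsCompl E₂ hcompl +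
    E₂.subtype ∘ₗ (h : E₂ →ₗ[ℂ] E₂) ∘ₗ E₂.linearProjOfIsCompl E₁ hcompl.symm

theorem phi_apply (x : V) :
    Φ x = ↑(g (E₁.linearProjOfIsCompl E₂ hcompl x)) +
      ↑(h (E₂.linearProjOfIsCompl E₁ hcompl.symm x)) := rfl

theorem phi_apply_E1 (z : V) (hz : z ∈ E₁) : Φ z = ↑(g ⟨z, hz⟩) := by
  rw [phi_apply]
  rw [show E₁.linearProjOfIsCompl E₂ hcompl z = ⟨z, hz⟩ from
    Submodule.linearProjOfIsCompl_apply_left hcompl ⟨z, hz⟩,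
    show E₂.linearProjOfIsCompl E₁ hcompl.symm z = 0 from
      Submodule.projectionOnto_apply_of_mem_right hcompl.symm hz]
  simp

theorem phi_apply_E2 (z : V) (hz : z ∈ E₂) : Φ z = ↑(h ⟨z, hz⟩) := by
  rw [phi_apply]
  rw [show E₂.linearProjOfIsCompl E₁ hcompl.symm z = ⟨z, hz⟩ from
    Submodule.linearProjOfIsCompl_apply_left hcompl.symm ⟨z, hz⟩,
    show E₁.linearProjOfIsCompl E₂ hcompl z = 0 from
      Submodule.projectionOnto_apply_of_mem_right hcompl hz]
  simp

theorem phi_injective : Function.Injective Φ := by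
  rw [← LinearMap.ker_eq_bot, eq_bot_iff]
  intro v hv
  simp only [LinearMap.mem_ker] at hv
  rw [phi_apply] at hv
  have h1 : (↑(g (E₁.linearProjOfIsCompl E₂ hcompl v)) : V) = 0 := by
    have hmem : (↑(g (E₁.linearProjOfIsCompl E₂ hcompl v)) : V) ∈ E₁ ⊓ E₂ :=
      ⟨(g _).2, by
        have : (↑(g (E₁.linearProjOfIsCompl E₂ hcompl v)) : V) =
            -(↑(h (E₂.linearProjOfIsCompl E₁ hcompl.symm v)) : V) :=
          eq_neg_of_add_eq_zero_left hv
        rw [this]; exact neg_mem (h _).2⟩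
    rw [hcompl.inf_eq_bot] at hmem
    exact hmem
  have h2 : (↑(h (E₂.linearProjOfIsCompl E₁ hcompl.symm v)) : V) = 0 := by
    rw [h1, zero_add] at hv; exact hv
  have p1 : E₁.linearProjOfIsCompl E₂ hcompl v = 0 :=
    g.injective (by rw [map_zero]; exact Subtype.ext h1)
  have p2 : E₂.linearProjOfIsCompl E₁ hcompl.symm v = 0 :=
    h.injective (by rw [map_zero]; exact Subtype.ext h2)
  have : ((E₁.linearProjOfIsCompl E₂ hcompl v : E₁) : V) +
      (E₂.linearProjOfIsCompl E₁ hcompl.symm v : E₂) = v :=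
    Submodule.projection_add_projection_eq_self hcompl v
  rw [p1, p2] at this
  simpa using this.symm

theorem phi_map_E1 : Submodule.map Φ E₁ = E₁ := by
  apply le_antisymm
  · rintro _ ⟨z, hz, rfl⟩
    rw [phi_apply_E1 E₁ E₂ hcompl g h z hz]
    exact (g ⟨z, hz⟩).2
  · intro y hy
    refine ⟨↑(g.symm ⟨y, hy⟩), (g.symm ⟨y, hy⟩).2, ?_⟩
    rw [phi_apply_E1 E₁ E₂ hcompl g h _ (g.symm ⟨y, hy⟩).2]
    simp

theorem phi_map_E2 : Submodule.map Φ E₂ = E₂ := by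
  apply le_antisymm
  · rintro _ ⟨z, hz, rfl⟩
    rw [phi_apply_E2 E₁ E₂ hcompl g h z hz]
    exact (h ⟨z, hz⟩).2
  · intro y hy
    refine ⟨↑(h.symm ⟨y, hy⟩), (h.symm ⟨y, hy⟩).2, ?_⟩
    rw [phi_apply_E2 E₁ E₂ hcompl g h _ (h.symm ⟨y, hy⟩).2]
    simp

end Phi

theorem orbit_classification_GLp_GLq (p q k n : ℕ) (hp : 0 < p) (hq : 0 < q) (hk : 0 < k)
    (hpq : p + q = n) (hkn : k ≤ n)
    (E₁ E₂ : Submodule ℂ (Fin n → ℂ)) (hcompl : IsCompl E₁ E₂)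
    (hE₁ : finrank ℂ E₁ = p) (hE₂ : finrank ℂ E₂ = q)
    (U U' : Submodule ℂ (Fin n → ℂ))
    (hU : finrank ℂ U = k) (hU' : finrank ℂ U' = k) :
    (∃ (g : E₁ ≃ₗ[ℂ] E₁) (h : E₂ ≃ₗ[ℂ] E₂),
        Submodule.map
          (E₁.subtype ∘ₗ (g : E₁ →ₗ[ℂ] E₁) ∘ₗ E₁.linearProjOfIsCompl E₂ hcompl +
           E₂.subtype ∘ₗ (h : E₂ →ₗ[ℂ] E₂) ∘ₗ E₂.linearProjOfIsCompl E₁ hcompl.symm) U = U') ↔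
      (finrank ℂ ↥(U ⊓ E₁) = finrank ℂ ↥(U' ⊓ E₁) ∧
       finrank ℂ ↥(U ⊓ E₂) = finrank ℂ ↥(U' ⊓ E₂)) := by
  constructor
  · rintro ⟨g, h, hmap⟩
    set Φ := E₁.subtype ∘ₗ (g : E₁ →ₗ[ℂ] E₁) ∘ₗ E₁.linearProjOfIsCompl E₂ hcompl +
      E₂.subtype ∘ₗ (h : E₂ →ₗ[ℂ] E₂) ∘ₗ E₂.linearProjOfIsCompl E₁ hcompl.symm with hΦ
    have hinj : Function.Injective Φ := phi_injective E₁ E₂ hcompl g h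
    constructor
    · have h1 : Submodule.map Φ (U ⊓ E₁) = U' ⊓ E₁ := by
        rw [Submodule.map_inf Φ hinj, hmap, phi_map_E1 E₁ E₂ hcompl g h]
      calc finrank ℂ ↥(U ⊓ E₁) = finrank ℂ ↥(Submodule.map Φ (U ⊓ E₁)) :=
            (Submodule.equivMapOfInjective Φ hinj (U ⊓ E₁)).finrank_eq
        _ = finrank ℂ ↥(U' ⊓ E₁) := by rw [h1]
    · have h2 : Submodule.map Φ (U ⊓ E₂) = U' ⊓ E₂ := by
        rw [Submodule.map_inf Φ hinj, hmap, phi_map_E2 E₁ E₂ hcompl g h]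
      calc finrank ℂ ↥(U ⊓ E₂) = finrank ℂ ↥(Submodule.map Φ (U ⊓ E₂)) :=
            (Submodule.equivMapOfInjective Φ hinj (U ⊓ E₂)).finrank_eq
        _ = finrank ℂ ↥(U' ⊓ E₂) := by rw [h2]
  · rintro ⟨hs, ht⟩
    obtain ⟨W, hWU, hWdisj, hWsup, hWrk⟩ := aux_decomp U E₁ E₂ hcompl
    obtain ⟨W', hWU', hWdisj', hWsup', hWrk'⟩ := aux_decomp U' E₁ E₂ hcompl
    -- the projections restricted to W
    set α := E₁.linearProjOfIsCompl E₂ hcompl ∘ₗ W.subtype with hα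
    set β := E₂.linearProjOfIsCompl E₁ hcompl.symm ∘ₗ W.subtype with hβ
    set α' := E₁.linearProjOfIsCompl E₂ hcompl ∘ₗ W'.subtype with hα'
    set β' := E₂.linearProjOfIsCompl E₁ hcompl.symm ∘ₗ W'.subtype with hβ'
    obtain ⟨hαinj, hαdisj⟩ := aux_alpha U W E₁ E₂ hcompl hWU hWdisj
    obtain ⟨hαinj', hαdisj'⟩ := aux_alpha U' W' E₁ E₂ hcompl hWU' hWdisj'
    obtain ⟨hβinj, hβdisj⟩ := aux_alpha U W E₂ E₁ hcompl.symm hWU (by rwa [sup_comm] at hWdisj)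
    obtain ⟨hβinj', hβdisj'⟩ :=
      aux_alpha U' W' E₂ E₁ hcompl.symm hWU' (by rwa [sup_comm] at hWdisj')
    -- equivalence between W and W'
    have hWW' : finrank ℂ W = finrank ℂ W' := by omega
    set wE : (W : Submodule ℂ (Fin n → ℂ)) ≃ₗ[ℂ] W' := LinearEquiv.ofFinrankEq _ _ hWW' with hwE
    set αe := LinearEquiv.ofInjective α hαinj with hαe
    set αe' := LinearEquiv.ofInjective α' hαinj' with hαe'
    set βe := LinearEquiv.ofInjective β hβinj with hβe
    set βe' := LinearEquiv.ofInjective β' hβinj' with hβe'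
    -- glue inside E₁
    obtain ⟨g, hgU, hgA⟩ := glue2 (Submodule.comap E₁.subtype (U ⊓ E₁)) (LinearMap.range α)
      (Submodule.comap E₁.subtype (U' ⊓ E₁)) (LinearMap.range α') hαdisj hαdisj'
      ((Submodule.comapSubtypeEquivOfLe inf_le_right).trans
        ((LinearEquiv.ofFinrankEq _ _ hs).trans
          (Submodule.comapSubtypeEquivOfLe inf_le_right).symm))
      (αe.symm.trans (wE.trans αe'))
    -- glue inside E₂
    obtain ⟨h, hhU, hhB⟩ := glue2 (Submodule.comap E₂.subtype (U ⊓ E₂)) (LinearMap.range β)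
      (Submodule.comap E₂.subtype (U' ⊓ E₂)) (LinearMap.range β') hβdisj hβdisj'
      ((Submodule.comapSubtypeEquivOfLe inf_le_right).trans
        ((LinearEquiv.ofFinrankEq _ _ ht).trans
          (Submodule.comapSubtypeEquivOfLe inf_le_right).symm))
      (βe.symm.trans (wE.trans βe'))
    refine ⟨g, h, ?_⟩
    set Φ := E₁.subtype ∘ₗ (g : E₁ →ₗ[ℂ] E₁) ∘ₗ E₁.linearProjOfIsCompl E₂ hcompl +
      E₂.subtype ∘ₗ (h : E₂ →ₗ[ℂ] E₂) ∘ₗ E₂.linearProjOfIsCompl E₁ hcompl.symm with hΦ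
    have hinj : Function.Injective Φ := phi_injective E₁ E₂ hcompl g h
    have hle : Submodule.map Φ U ≤ U' := by
      rw [← hWsup, Submodule.map_sup, Submodule.map_sup]
      refine sup_le (sup_le ?_ ?_) ?_
      · rintro _ ⟨z, hz, rfl⟩
        rw [phi_apply_E1 E₁ E₂ hcompl g h z hz.2]
        have hzc : (⟨z, hz.2⟩ : E₁) ∈ Submodule.comap E₁.subtype (U ⊓ E₁) := hz
        have := hgU ⟨⟨z, hz.2⟩, hzc⟩
        rw [this]
        have hmem := (((Submodule.comapSubtypeEquivOfLe inf_le_right).trans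
          ((LinearEquiv.ofFinrankEq _ _ hs).trans
            (Submodule.comapSubtypeEquivOfLe inf_le_right).symm)) ⟨⟨z, hz.2⟩, hzc⟩).2
        simp only [Submodule.mem_comap, Submodule.coe_subtype] at hmem
        exact hmem.1
      · rintro _ ⟨z, hz, rfl⟩
        rw [phi_apply_E2 E₁ E₂ hcompl g h z hz.2]
        have hzc : (⟨z, hz.2⟩ : E₂) ∈ Submodule.comap E₂.subtype (U ⊓ E₂) := hz
        have := hhU ⟨⟨z, hz.2⟩, hzc⟩
        rw [this]
        have hmem := (((Submodule.comapSubtypeEquivOfLe inf_le_right).trans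
          ((LinearEquiv.ofFinrankEq _ _ ht).trans
            (Submodule.comapSubtypeEquivOfLe inf_le_right).symm)) ⟨⟨z, hz.2⟩, hzc⟩).2
        simp only [Submodule.mem_comap, Submodule.coe_subtype] at hmem
        exact hmem.1
      · rintro _ ⟨w, hw, rfl⟩
        set w1 : ↥W := ⟨w, hw⟩ with hw1
        rw [phi_apply E₁ E₂ hcompl g h w]
        have hρ₁ : E₁.linearProjOfIsCompl E₂ hcompl w = α w1 := rfl
        have hρ₂ : E₂.linearProjOfIsCompl E₁ hcompl.symm w = β w1 := rfl
        have hαeap : α w1 = ↑(αe w1) := rfl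
        have hβeap : β w1 = ↑(βe w1) := rfl
        have e1 : g (α w1) = ↑((αe.symm.trans (wE.trans αe')) (αe w1)) := by
          rw [hαeap]; exact hgA (αe w1)
        have e2 : h (β w1) = ↑((βe.symm.trans (wE.trans βe')) (βe w1)) := by
          rw [hβeap]; exact hhB (βe w1)
        rw [hρ₁, hρ₂, e1, e2]
        simp only [LinearEquiv.trans_apply, LinearEquiv.symm_apply_apply]
        have h3 : (↑(↑(αe' (wE w1)) : E₁) : Fin n → ℂ) + ↑(↑(βe' (wE w1)) : E₂) = ↑(wE w1) := by
          have ha : (↑(αe' (wE w1)) : E₁) = α' (wE w1) := rfl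
          have hb : (↑(βe' (wE w1)) : E₂) = β' (wE w1) := rfl
          rw [ha, hb]
          exact Submodule.projection_add_projection_eq_self hcompl ↑(wE w1)
        rw [h3]
        exact hWU' (wE w1).2
    have hfr : finrank ℂ ↥(Submodule.map Φ U) = k := by
      rw [← hU]
      exact (Submodule.equivMapOfInjective Φ hinj U).symm.finrank_eq
    exact Submodule.eq_of_le_of_finrank_le hle (by rw [hfr, hU'])
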